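/- Let α ∈ (1,2], let ℓ̃ : (0,∞) → (0,∞) be slowly varying, let A be a complex Banach algebra with unit, U ⊆ ℝ^d open and bounded, and Q : U → A continuously differentiable. Suppose there are constants C > 0 and δ₀ ∈ (0,1) such that for all s, s+h ∈ U and j = 1, …, d: ‖Q(s)^n‖ ≤ C·δ₀^n for all n ≥ 1, ‖Q(s+h) - Q(s)‖ ≤ C·|h|, ‖∂_jQ(s)‖ ≤ C, ‖∂_jQ(s+h) - ∂_jQ(s)‖ ≤ C·|h|^{α-1}·ℓ̃(1/|h|), and additionally |h| ≤ C·|h|^{α-1}·ℓ̃(1/|h|) for all nonzero h with s, s+h ∈ U. Then for every δ₁ ∈ (δ₀, 1) there exists C' > 0 such that ‖∂_j(Q(s+h)^n) - ∂_j(Q(s)^n)‖ ≤ C'·δ₁^n·|h|^{α-1}·ℓ̃(1/|h|) for all s, s+h ∈ U with h ≠ 0, all n ≥ 1, and all j = 1, …, d. -/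

import Mathlib

open Filter

lemma aux_pow_sub_pow {A : Type*} [Ring A] (a b : A) :
    ∀ k : ℕ, a ^ k - b ^ k = ∑ i ∈ Finset.range k, a ^ i * (a - b) * b ^ (k - 1 - i) := by
  intro k
  induction k with
  | zero => simp
  | succ k ih =>
    rw [Finset.sum_range_succ']
    have h1 : ∀ i ∈ Finset.range k, a ^ (i+1) * (a - b) * b ^ (k + 1 - 1 - (i+1))
        = a * (a ^ i * (a - b) * b ^ (k - 1 - i)) := by
      intro i hi
      have : k + 1 - 1 - (i + 1) = k - 1 - i := by omega
      rw [this, pow_succ']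
      noncomm_ring
    rw [Finset.sum_congr rfl h1, ← Finset.mul_sum, ← ih]
    simp only [pow_zero, one_mul, Nat.add_sub_cancel, Nat.sub_zero]
    rw [pow_succ' a, pow_succ' b]
    noncomm_ring

lemma aux_fderiv_pow_eval {A : Type*} [NormedRing A] [NormedAlgebra ℝ A]
    {E : Type*} [NormedAddCommGroup E] [NormedSpace ℝ E]
    (Q : E → A) (s : E) (v : E) (hQ : DifferentiableAt ℝ Q s) (n : ℕ) :
    fderiv ℝ (fun t => Q t ^ n) s v
      = ∑ k ∈ Finset.range n, Q s ^ k * fderiv ℝ Q s v * Q s ^ (n - 1 - k) := by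
  induction n with
  | zero => simp
  | succ n ih =>
    have hfun : (fun t => Q t ^ (n+1)) = fun t => Q t ^ n * Q t := by
      funext t; rw [pow_succ]
    rw [hfun, fderiv_fun_mul' (a := fun t => Q t ^ n) (hQ.pow n) hQ]
    simp only [ContinuousLinearMap.add_apply, ContinuousLinearMap.smul_apply,
      ContinuousLinearMap.smulRight_apply, smul_eq_mul, op_smul_eq_mul, ih]
    rw [Finset.sum_range_succ, Finset.sum_mul]
    have h1 : ∀ k ∈ Finset.range n,
        Q s ^ k * fderiv ℝ Q s v * Q s ^ (n - 1 - k) * Q s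
          = Q s ^ k * fderiv ℝ Q s v * Q s ^ (n + 1 - 1 - k) := by
      intro k hk
      simp only [Finset.mem_range] at hk
      have : n + 1 - 1 - k = (n - 1 - k) + 1 := by omega
      rw [this, pow_succ, mul_assoc]
    rw [Finset.sum_congr rfl h1]
    have : n + 1 - 1 - n = 0 := by omega
    rw [this, pow_zero, mul_one]
    ring_nf
    abel

set_option maxHeartbeats 1000000 in
/-- Second estimate of Lemma `lemma-op`: Hölder modulus of continuity of the derivative
of powers of `Q`. -/
theorem fderiv_pow_diff_norm_le
    (α : ℝ) (hα : α ∈ Set.Ioc (1 : ℝ) 2)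
    (ℓt : ℝ → ℝ) (hℓtpos : ∀ x > (0 : ℝ), 0 < ℓt x)
    (hℓtslow : ∀ lam > (0 : ℝ), Filter.Tendsto (fun x => ℓt (lam * x) / ℓt x)
      Filter.atTop (nhds 1))
    {A : Type*} [NormedRing A] [NormedAlgebra ℂ A] [CompleteSpace A]
    (d : ℕ) (U : Set (EuclideanSpace ℝ (Fin d))) (hUopen : IsOpen U)
    (hUbdd : Bornology.IsBounded U)
    (Q : EuclideanSpace ℝ (Fin d) → A)
    (hQdiff : ContDiffOn ℝ 1 Q U)
    (C : ℝ) (hC : 0 < C) (δ₀ : ℝ) (hδ₀ : δ₀ ∈ Set.Ioo (0 : ℝ) 1)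
    (hpow : ∀ s ∈ U, ∀ n : ℕ, 1 ≤ n → ‖Q s ^ n‖ ≤ C * δ₀ ^ n)
    (hlip : ∀ s ∈ U, ∀ h : EuclideanSpace ℝ (Fin d), s + h ∈ U →
      ‖Q (s + h) - Q s‖ ≤ C * ‖h‖)
    (hdbdd : ∀ s ∈ U, ∀ j : Fin d, ‖fderiv ℝ Q s (EuclideanSpace.single j 1)‖ ≤ C)
    (hdholder : ∀ s ∈ U, ∀ h : EuclideanSpace ℝ (Fin d), s + h ∈ U → ∀ j : Fin d,
      ‖fderiv ℝ Q (s + h) (EuclideanSpace.single j 1)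
          - fderiv ℝ Q s (EuclideanSpace.single j 1)‖
        ≤ C * ‖h‖ ^ (α - 1) * ℓt (1 / ‖h‖))
    (hcompare : ∀ s ∈ U, ∀ h : EuclideanSpace ℝ (Fin d), s + h ∈ U → h ≠ 0 →
      ‖h‖ ≤ C * ‖h‖ ^ (α - 1) * ℓt (1 / ‖h‖)) :
    ∀ δ₁ ∈ Set.Ioo δ₀ 1, ∃ C' > (0 : ℝ),
      ∀ s ∈ U, ∀ h : EuclideanSpace ℝ (Fin d), s + h ∈ U → h ≠ 0 →
      ∀ n : ℕ, 1 ≤ n → ∀ j : Fin d,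
      ‖fderiv ℝ (fun t => Q t ^ n) (s + h) (EuclideanSpace.single j 1)
          - fderiv ℝ (fun t => Q t ^ n) s (EuclideanSpace.single j 1)‖
        ≤ C' * δ₁ ^ n * ‖h‖ ^ (α - 1) * ℓt (1 / ‖h‖) := by
  intro δ₁ hδ₁
  obtain ⟨hδ₀0, hδ₀1⟩ := hδ₀
  obtain ⟨hδ01, hδ₁1⟩ := hδ₁
  have hδ₁0 : 0 < δ₁ := hδ₀0.trans hδ01
  set M : ℝ := max 1 (max C ‖(1:A)‖) with hMdef
  have hM1 : (1:ℝ) ≤ M := le_max_left _ _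
  have hMC : C ≤ M := le_trans (le_max_left _ _) (le_max_right _ _)
  have hM1A : ‖(1:A)‖ ≤ M := le_trans (le_max_right _ _) (le_max_right _ _)
  have hM0 : (0:ℝ) < M := lt_of_lt_of_le one_pos hM1
  -- uniform bound on powers of Q
  have hQpowM : ∀ s ∈ U, ∀ k : ℕ, ‖Q s ^ k‖ ≤ M * δ₀ ^ k := by
    intro s hs k
    cases k with
    | zero => simpa using hM1A
    | succ k =>
      refine (hpow s hs (k+1) (Nat.succ_le_succ (Nat.zero_le _))).trans ?_
      exact mul_le_mul_of_nonneg_right hMC (pow_nonneg hδ₀0.le _)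
  -- geometric absorption of n^2
  have hr1 : ‖δ₀/δ₁‖ < 1 := by
    rw [Real.norm_eq_abs, abs_of_pos (div_pos hδ₀0 hδ₁0)]
    rw [div_lt_one hδ₁0]; exact hδ01
  have hsum := summable_norm_pow_mul_geometric_of_norm_lt_one (R := ℝ) 2 hr1
  obtain ⟨K₀, hK₀⟩ := hsum.tendsto_atTop_zero.bddAbove_range
  have hK₀' : ∀ n : ℕ, (n:ℝ)^2 * (δ₀/δ₁)^n ≤ K₀ := by
    intro n
    exact le_trans (le_abs_self _) (hK₀ ⟨n, rfl⟩)
  set K : ℝ := K₀ + 1 with hKdef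
  have hKpos : 0 < K := by
    have h0 : (0:ℝ) ≤ K₀ := le_trans (by simp) (hK₀ ⟨0, rfl⟩)
    linarith
  have hK : ∀ n : ℕ, (n:ℝ)^2 * δ₀^n ≤ K * δ₁^n := by
    intro n
    have h1 : (n:ℝ)^2 * (δ₀/δ₁)^n * δ₁^n ≤ K * δ₁^n := by
      refine mul_le_mul_of_nonneg_right ?_ (pow_nonneg hδ₁0.le _)
      exact le_trans (hK₀' n) (by linarith)
    calc (n:ℝ)^2 * δ₀^n = (n:ℝ)^2 * (δ₀/δ₁)^n * δ₁^n := by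
          rw [div_pow, mul_assoc, div_mul_cancel₀]
          exact pow_ne_zero _ (ne_of_gt hδ₁0)
      _ ≤ K * δ₁^n := h1
  set B : ℝ := M^3*C^3*δ₀⁻¹ + M^2*C with hBdef
  have hBpos : 0 < B := by
    have := inv_pos.mpr hδ₀0
    positivity
  refine ⟨B * K / δ₀, by positivity, ?_⟩
  intro s hs h hshU hh0 n hn j
  set v := EuclideanSpace.single (𝕜 := ℝ) j (1:ℝ) with hv
  have hQdiffAt : ∀ t ∈ U, DifferentiableAt ℝ Q t := fun t ht =>
    (hQdiff.differentiableOn one_ne_zero).differentiableAt (hUopen.mem_nhds ht)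
  have hnh : 0 < ‖h‖ := norm_pos_iff.mpr hh0
  set ε : ℝ := ‖h‖ ^ (α-1) * ℓt (1/‖h‖) with hεdef
  have hε : 0 < ε := mul_pos (Real.rpow_pos_of_pos hnh _) (hℓtpos _ (by positivity))
  have hhε : ‖h‖ ≤ C * ε := by
    rw [hεdef, ← mul_assoc]; exact hcompare s hs h hshU hh0
  set a := Q (s+h) with ha
  set b := Q s with hb
  set e := fderiv ℝ Q (s+h) v with he'
  set f := fderiv ℝ Q s v with hf'
  have hab : ‖a - b‖ ≤ C^2 * ε := by
    refine (hlip s hs h hshU).trans ?_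
    calc C * ‖h‖ ≤ C * (C * ε) := mul_le_mul_of_nonneg_left hhε hC.le
      _ = C^2 * ε := by ring
  have he : ‖e‖ ≤ C := hdbdd (s+h) hshU j
  have hf : ‖f‖ ≤ C := hdbdd s hs j
  have hef : ‖e - f‖ ≤ C * ε := by
    have := hdholder s hs h hshU j
    rw [mul_assoc] at this
    exact this
  have hak : ∀ k : ℕ, ‖a^k‖ ≤ M * δ₀^k := hQpowM _ hshU
  have hbk : ∀ k : ℕ, ‖b^k‖ ≤ M * δ₀^k := hQpowM _ hs
  have norm3 : ∀ x y z : A, ‖x*y*z‖ ≤ ‖x‖*‖y‖*‖z‖ := fun x y z =>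
    (norm_mul_le _ _).trans (mul_le_mul_of_nonneg_right (norm_mul_le _ _) (norm_nonneg _))
  have mul3 : ∀ x1 x2 x3 y1 y2 y3 : ℝ, x1 ≤ y1 → x2 ≤ y2 → x3 ≤ y3 →
      0 ≤ x2 → 0 ≤ x3 → 0 ≤ y1 → 0 ≤ y2 → x1*x2*x3 ≤ y1*y2*y3 := by
    intro x1 x2 x3 y1 y2 y3 h1 h2 h3 hx2 hx3 hy1 hy2
    exact mul_le_mul (mul_le_mul h1 h2 hx2 hy1) h3 hx3 (mul_nonneg hy1 hy2)
  -- difference of powers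
  have hpowdiff : ∀ (x y : A), (∀ k:ℕ, ‖x^k‖ ≤ M*δ₀^k) → (∀ k:ℕ, ‖y^k‖ ≤ M*δ₀^k) →
      ‖x - y‖ ≤ C^2*ε → ∀ k : ℕ, ‖x^k - y^k‖ ≤ (k:ℝ) * (M^2*C^2*ε*δ₀⁻¹) * δ₀^k := by
    intro x y hx hy hxy k
    rw [aux_pow_sub_pow]
    refine (norm_sum_le _ _).trans ?_
    have hbd : ∀ i ∈ Finset.range k, ‖x^i * (x-y) * y^(k-1-i)‖
        ≤ M^2*C^2*ε*δ₀⁻¹ * δ₀^k := by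
      intro i hi
      rw [Finset.mem_range] at hi
      calc ‖x^i * (x-y) * y^(k-1-i)‖ ≤ ‖x^i‖*‖x-y‖*‖y^(k-1-i)‖ := norm3 _ _ _
        _ ≤ (M*δ₀^i) * (C^2*ε) * (M*δ₀^(k-1-i)) :=
            mul3 _ _ _ _ _ _ (hx i) hxy (hy _) (norm_nonneg _) (norm_nonneg _)
              (by positivity) (by positivity)
        _ = M^2*C^2*ε * (δ₀^i * δ₀^(k-1-i)) := by ring
        _ = M^2*C^2*ε * δ₀^(k-1) := by rw [← pow_add]; congr 2; omega
        _ = M^2*C^2*ε*δ₀⁻¹ * δ₀^k := by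
            have hk1 : k = (k-1)+1 := by omega
            rw [hk1, pow_succ]
            field_simp
            ring
            rw [show 1 + (k - 1) - 1 = k - 1 by omega]
    refine (Finset.sum_le_sum hbd).trans ?_
    rw [Finset.sum_const, Finset.card_range, nsmul_eq_mul]
    ring_nf
    exact le_refl _
  have hab' := hpowdiff a b hak hbk hab
  -- rewrite the derivative of the power
  rw [aux_fderiv_pow_eval Q (s+h) v (hQdiffAt _ hshU) n,
      aux_fderiv_pow_eval Q s v (hQdiffAt _ hs) n, ← Finset.sum_sub_distrib]
  have hεδ : (0:ℝ) ≤ ε * δ₀^(n-1) := mul_nonneg hε.le (pow_nonneg hδ₀0.le _)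
  have hterm : ∀ k ∈ Finset.range n,
      ‖a^k * e * a^(n-1-k) - (b^k * f * b^(n-1-k))‖ ≤ (n:ℝ) * (B * ε * δ₀^(n-1)) := by
    intro k hk
    rw [Finset.mem_range] at hk
    set m := n-1-k with hm
    have hkm : k + m = n - 1 := by omega
    have hdec : a^k * e * a^m - b^k * f * b^m
        = (a^k - b^k) * e * a^m + b^k * (e - f) * a^m + b^k * f * (a^m - b^m) := by
      noncomm_ring
    rw [hdec]
    have hpkm : δ₀^k * δ₀^m = δ₀^(n-1) := by rw [← pow_add, hkm]
    have p1 : ‖(a^k - b^k) * e * a^m‖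
        ≤ ((k:ℝ) * (M^2*C^2*ε*δ₀⁻¹) * δ₀^k) * C * (M*δ₀^m) :=
      (norm3 _ _ _).trans (mul3 _ _ _ _ _ _ (hab' k) he (hak m) (norm_nonneg _)
        (norm_nonneg _) (le_trans (norm_nonneg _) (hab' k)) hC.le)
    have p2 : ‖b^k * (e - f) * a^m‖ ≤ (M*δ₀^k) * (C*ε) * (M*δ₀^m) :=
      (norm3 _ _ _).trans (mul3 _ _ _ _ _ _ (hbk k) hef (hak m) (norm_nonneg _)
        (norm_nonneg _) (by positivity) (by positivity))
    have hba' := hpowdiff b a hbk hak (by rwa [norm_sub_rev] at hab)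
    have p3 : ‖b^k * f * (b^m - a^m)‖
        ≤ (M*δ₀^k) * C * ((m:ℝ) * (M^2*C^2*ε*δ₀⁻¹) * δ₀^m) :=
      (norm3 _ _ _).trans (mul3 _ _ _ _ _ _ (hbk k) hf (hba' m) (norm_nonneg _)
        (norm_nonneg _) (by positivity) hC.le)
    have hrev : ‖b^k * f * (a^m - b^m)‖ = ‖b^k * f * (b^m - a^m)‖ := by
      rw [show b^k * f * (a^m - b^m) = -(b^k * f * (b^m - a^m)) by noncomm_ring, norm_neg]
    calc ‖(a^k - b^k) * e * a^m + b^k * (e - f) * a^m + b^k * f * (a^m - b^m)‖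
        ≤ ‖(a^k - b^k) * e * a^m‖ + ‖b^k * (e - f) * a^m‖ + ‖b^k * f * (a^m - b^m)‖ :=
          norm_add₃_le
      _ ≤ ((k:ℝ) * (M^2*C^2*ε*δ₀⁻¹) * δ₀^k) * C * (M*δ₀^m) + (M*δ₀^k) * (C*ε) * (M*δ₀^m)
            + (M*δ₀^k) * C * ((m:ℝ) * (M^2*C^2*ε*δ₀⁻¹) * δ₀^m) := by
          rw [hrev]; exact add_le_add (add_le_add p1 p2) p3
      _ = (ε * δ₀^(n-1)) * (((k:ℝ)+(m:ℝ)) * (M^3*C^3*δ₀⁻¹) + M^2*C) := by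
          rw [← hpkm]; ring
      _ ≤ (ε * δ₀^(n-1)) * ((n:ℝ) * B) := by
          refine mul_le_mul_of_nonneg_left ?_ hεδ
          have hkmr : (k:ℝ) + (m:ℝ) ≤ (n:ℝ) := by
            have : ((k+m : ℕ):ℝ) ≤ (n:ℝ) := Nat.cast_le.mpr (by omega)
            push_cast at this; linarith
          have hn1 : (1:ℝ) ≤ (n:ℝ) := by exact_mod_cast hn
          have h1 : (0:ℝ) < M^3*C^3*δ₀⁻¹ := by positivity
          have h2 : (0:ℝ) < M^2*C := by positivity
          have g1 : ((k:ℝ)+(m:ℝ)) * (M^3*C^3*δ₀⁻¹) ≤ (n:ℝ) * (M^3*C^3*δ₀⁻¹) :=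
            mul_le_mul_of_nonneg_right hkmr h1.le
          have g2 : (1:ℝ) * (M^2*C) ≤ (n:ℝ) * (M^2*C) :=
            mul_le_mul_of_nonneg_right hn1 h2.le
          rw [hBdef]
          nlinarith [g1, g2]
      _ = (n:ℝ) * (B * ε * δ₀^(n-1)) := by ring
  refine (norm_sum_le _ _).trans ((Finset.sum_le_sum hterm).trans ?_)
  rw [Finset.sum_const, Finset.card_range, nsmul_eq_mul]
  have hδpow : δ₀^(n-1) * δ₀ = δ₀^n := by
    rw [← pow_succ]; congr 1; omega
  have hgoal : (n:ℝ) * ((n:ℝ) * (B * ε * δ₀^(n-1))) = (B * ε * δ₀⁻¹) * ((n:ℝ)^2 * δ₀^n) := by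
    rw [← hδpow]; field_simp
  rw [hgoal]
  have hfin : (B * ε * δ₀⁻¹) * ((n:ℝ)^2 * δ₀^n) ≤ (B * ε * δ₀⁻¹) * (K * δ₁^n) :=
    mul_le_mul_of_nonneg_left (hK n) (by positivity)
  refine hfin.trans ?_
  rw [hεdef]
  ring_nf
  exact le_refl _
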